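/- arXiv:2605.24084 — 6 statements merged into one kernel-verified Lean document; each statement's English description precedes it below -/
import Mathlib

section
/- For natural numbers n, r, s with r ≤ s ≤ n-1, the following identity holds: (1/n) · ∑_{k=0}^{n-1-s} C(n-1-s, k) / C(n-1, k+r) = 1 / ((s+1) · C(s, r)). -/
open Finset

lemma hockey (a M : ℕ) :
    ∑ k ∈ Finset.range (M + 1), (k + a).choose a = (M + a + 1).choose (a + 1) := by
  have h := Nat.sum_Icc_choose (M + a) a
  rw [← h, ← Finset.Ico_add_one_right_eq_Icc, Finset.sum_Ico_eq_sum_range]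
  have : M + a + 1 - a = M + 1 := by omega
  rw [this]
  exact Finset.sum_congr rfl fun k _ => by rw [Nat.add_comm a k]

lemma vand (b a M : ℕ) :
    ∑ k ∈ Finset.range (M + 1), (k + a).choose a * (M - k + b).choose b
      = (M + a + b + 1).choose (a + b + 1) := by
  induction b generalizing M with
  | zero => simpa using hockey a M
  | succ b ih =>
    have step : ∀ k ∈ Finset.range (M + 1),
        (k + a).choose a * (M - k + (b + 1)).choose (b + 1)
          = ∑ t ∈ Finset.Ico k (M + 1), (k + a).choose a * (t - k + b).choose b := by
      intro k hk
      rw [Finset.mem_range] at hk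
      have hk' : k ≤ M := by omega
      rw [← Finset.mul_sum]
      congr 1
      have h := hockey b (M - k)
      rw [show M - k + (b + 1) = M - k + b + 1 by omega, ← h, Finset.sum_Ico_eq_sum_range]
      have h2 : M + 1 - k = M - k + 1 := by omega
      rw [h2]
      exact Finset.sum_congr rfl fun j _ => by
        congr 1; omega
    rw [Finset.sum_congr rfl step]
    have swap := Finset.sum_Ico_Ico_comm 0 (M + 1)
      (fun k t => (k + a).choose a * (t - k + b).choose b)
    rw [show Finset.range (M + 1) = Finset.Ico 0 (M + 1) by rw [Nat.Ico_zero_eq_range], swap]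
    have inner : ∀ t ∈ Finset.Ico 0 (M + 1),
        ∑ k ∈ Finset.Ico 0 (t + 1), (k + a).choose a * (t - k + b).choose b
          = (t + (a + b + 1)).choose (a + b + 1) := by
      intro t _
      rw [Nat.Ico_zero_eq_range, ih t]
      congr 1; omega
    rw [Finset.sum_congr rfl inner, Nat.Ico_zero_eq_range, hockey (a + b + 1) M]
    congr 1 <;> omega

lemma key_term (m r s k : ℕ) (hrs : r ≤ s) (hs : s ≤ m) (hk : k ≤ m - s) :
    m.choose (k + r) * ((k + r).choose r * (m - k - r).choose (s - r))
      = m.choose s * s.choose r * (m - s).choose k := by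
  have h1 : k + r ≤ m := by omega
  have h2 : r ≤ k + r := by omega
  -- C(m,k+r)*C(k+r,r) = C(m,r)*C(m-r,k)
  have e1 := Nat.choose_mul (n := m) h2
  rw [Nat.add_sub_cancel] at e1
  -- C(m,s)*C(s,r) = C(m,r)*C(m-r,s-r)
  have e2 := Nat.choose_mul (n := m) hrs
  -- C(m-r, k+(s-r))*C(k+(s-r), k) = C(m-r,k)*C(m-r-k, s-r)
  have h3 : k + (s - r) ≤ m - r := by omega
  have e3 := Nat.choose_mul (n := m - r) (Nat.le_add_right k (s - r))
  rw [Nat.add_sub_cancel_left] at e3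
  -- C(m-r, k+(s-r))*C(k+(s-r), s-r) = C(m-r,s-r)*C(m-r-(s-r), k)
  have e4 := Nat.choose_mul (n := m - r) (Nat.le_add_left (s - r) k)
  rw [Nat.add_sub_cancel] at e4
  have hsym : (k + (s - r)).choose k = (k + (s - r)).choose (s - r) :=
    Nat.choose_symm_add
  have hm1 : m - r - (s - r) = m - s := by omega
  have hm2 : m - r - k = m - k - r := by omega
  rw [hm1] at e4
  rw [hm2] at e3
  calc m.choose (k + r) * ((k + r).choose r * (m - k - r).choose (s - r))
      = (m.choose (k + r) * (k + r).choose r) * (m - k - r).choose (s - r) := by ring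
    _ = (m.choose r * (m - r).choose k) * (m - k - r).choose (s - r) := by rw [e1]
    _ = m.choose r * ((m - r).choose k * (m - k - r).choose (s - r)) := by ring
    _ = m.choose r * ((m - r).choose (k + (s - r)) * (k + (s - r)).choose k) := by rw [e3]
    _ = m.choose r * ((m - r).choose (k + (s - r)) * (k + (s - r)).choose (s - r)) := by
        rw [hsym]
    _ = m.choose r * ((m - r).choose (s - r) * (m - s).choose k) := by rw [e4]
    _ = (m.choose r * (m - r).choose (s - r)) * (m - s).choose k := by ring
    _ = m.choose s * s.choose r * (m - s).choose k := by rw [← e2]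

theorem stmt_0 (n r s : ℕ) (hn : 1 ≤ n) (hrs : r ≤ s) (hs : s ≤ n - 1) :
    (1 / (n : ℝ)) *
      ∑ k ∈ Finset.range (n - 1 - s + 1),
        ((n - 1 - s).choose k : ℝ) / ((n - 1).choose (k + r) : ℝ)
      = 1 / (((s : ℝ) + 1) * (s.choose r : ℝ)) := by
  set m := n - 1 with hm
  have hnm : n = m + 1 := by omega
  -- rewrite each term
  have term : ∀ k ∈ Finset.range (m - s + 1),
      ((m - s).choose k : ℝ) / (m.choose (k + r) : ℝ)
        = ((k + r).choose r * (m - k - r).choose (s - r) : ℝ)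
            / (m.choose s * s.choose r : ℝ) := by
    intro k hk
    rw [Finset.mem_range] at hk
    have hk' : k ≤ m - s := by omega
    have h1 : k + r ≤ m := by omega
    have hne1 : (m.choose (k + r) : ℝ) ≠ 0 := by
      exact_mod_cast (Nat.choose_pos h1).ne'
    have hne2 : ((m.choose s * s.choose r : ℕ) : ℝ) ≠ 0 := by
      exact_mod_cast (Nat.mul_pos (Nat.choose_pos hs) (Nat.choose_pos hrs)).ne'
    push_cast at hne2 ⊢
    rw [div_eq_div_iff hne1 hne2]
    have := key_term m r s k hrs hs hk'
    have := congrArg (fun x : ℕ => (x : ℝ)) this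
    push_cast at this
    linarith [this]
  rw [Finset.sum_congr rfl term]
  rw [← Finset.sum_div]
  have hv : ∑ k ∈ Finset.range (m - s + 1),
      ((k + r).choose r * (m - k - r).choose (s - r) : ℝ)
        = ((m + 1).choose (s + 1) : ℝ) := by
    have h := vand (s - r) r (m - s)
    have hcong : ∀ k ∈ Finset.range (m - s + 1),
        ((k + r).choose r * (m - k - r).choose (s - r) : ℝ)
          = ((k + r).choose r * (m - s - k + (s - r)).choose (s - r) : ℕ) := by
      intro k hk
      rw [Finset.mem_range] at hk
      have : m - k - r = m - s - k + (s - r) := by omega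
      push_cast [this]
      ring
    rw [Finset.sum_congr rfl hcong, ← Nat.cast_sum, h]
    congr 2 <;> omega
  rw [hv]
  -- now: (1/n) * (C(m+1,s+1) / (C(m,s)*C(s,r))) = 1/((s+1)*C(s,r))
  have hsucc : (m + 1) * m.choose s = (m + 1).choose (s + 1) * (s + 1) :=
    Nat.add_one_mul_choose_eq m s
  have hne3 : (m.choose s : ℝ) ≠ 0 := by exact_mod_cast (Nat.choose_pos hs).ne'
  have hne4 : (s.choose r : ℝ) ≠ 0 := by exact_mod_cast (Nat.choose_pos hrs).ne'
  have hne5 : ((n : ℝ)) ≠ 0 := by positivity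
  have hne6 : ((s : ℝ) + 1) ≠ 0 := by positivity
  have hsucc' : ((m : ℝ) + 1) * (m.choose s : ℝ) = ((m + 1).choose (s + 1) : ℝ) * ((s : ℝ) + 1) := by
    exact_mod_cast hsucc
  have hncast : (n : ℝ) = (m : ℝ) + 1 := by
    rw [hnm]; push_cast; ring
  rw [hncast]
  have hne7 : ((m : ℝ) + 1) ≠ 0 := by positivity
  field_simp
  nlinarith [hsucc', mul_pos (mul_pos (show (0:ℝ) < (s.choose r : ℝ) by positivity)
    (show (0:ℝ) < (m.choose s : ℝ) by positivity)) (show (0:ℝ) < (m:ℝ)+1 by positivity)]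
end

section
/- Let I, E ⊆ {1, ..., n} \ {i} be disjoint sets and let B := {S ⊆ {1, ..., n} \ {i} : I ⊆ S and E ∩ S = ∅}. With r := |I| and s := |I| + |E|, it holds that ∑_{S ∈ B} 1/(n · C(n-1, |S|)) = 1/((s+1) · C(s, r)). -/
open Finset

lemma ginv (n j : ℕ) (h : j ≤ n) :
    (1 : ℝ) / (((n : ℝ) + 1) * (n.choose j : ℝ)) =
      (j.factorial : ℝ) * ((n - j).factorial : ℝ) / ((n + 1).factorial : ℝ) := by
  have h1 : (n.choose j) * j.factorial * (n - j).factorial = n.factorial :=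
    Nat.choose_mul_factorial_mul_factorial h
  have h1' : ((n.choose j : ℝ)) * j.factorial * (n - j).factorial = n.factorial := by
    exact_mod_cast congrArg (Nat.cast : ℕ → ℝ) h1
  have hc : (0 : ℝ) < (n.choose j : ℝ) := by
    exact_mod_cast Nat.choose_pos h
  have hjf : (0 : ℝ) < (j.factorial : ℝ) := by exact_mod_cast j.factorial_pos
  have hnjf : (0 : ℝ) < ((n - j).factorial : ℝ) := by exact_mod_cast (n - j).factorial_pos
  rw [Nat.factorial_succ]
  push_cast
  rw [div_eq_div_iff (by positivity) (by positivity)]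
  nlinarith [h1']

lemma grec (n j : ℕ) (h : j ≤ n) :
    (1 : ℝ) / (((n : ℝ) + 2) * ((n + 1).choose j : ℝ)) +
      (1 : ℝ) / (((n : ℝ) + 2) * ((n + 1).choose (j + 1) : ℝ)) =
      (1 : ℝ) / (((n : ℝ) + 1) * (n.choose j : ℝ)) := by
  have e1 := ginv (n + 1) j (by omega)
  have e2 := ginv (n + 1) (j + 1) (by omega)
  have e3 := ginv n j h
  have hnj : n + 1 - j = (n - j) + 1 := by omega
  have hnj2 : n + 1 - (j + 1) = n - j := by omega
  rw [hnj] at e1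
  rw [hnj2] at e2
  push_cast at e1 e2
  rw [show ((n : ℝ) + 1 + 1) = (n : ℝ) + 2 from by ring] at e1 e2
  rw [e1, e2, e3]
  have hfs : (((n - j) + 1).factorial : ℝ) = ((n - j : ℕ) + 1) * ((n - j).factorial : ℝ) := by
    rw [Nat.factorial_succ]; push_cast; ring
  have hjs : ((j + 1).factorial : ℝ) = ((j : ℝ) + 1) * (j.factorial : ℝ) := by
    rw [Nat.factorial_succ]; push_cast; ring
  have hns : ((n + 1 + 1).factorial : ℝ) = ((n : ℝ) + 2) * ((n + 1).factorial : ℝ) := by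
    rw [Nat.factorial_succ]; push_cast; ring
  have hcastnj : ((n - j : ℕ) : ℝ) = (n : ℝ) - (j : ℝ) := by
    push_cast [Nat.cast_sub h]; ring
  have hf1 : (0 : ℝ) < ((n + 1).factorial : ℝ) := by exact_mod_cast (n + 1).factorial_pos
  rw [hfs, hjs, hns, hcastnj]
  field_simp
  ring

lemma key (r e : ℕ) : ∀ m : ℕ,
    ∑ k ∈ Finset.range (m + 1),
      (m.choose k : ℝ) * (1 / (((r + e + m : ℕ) : ℝ) + 1) / ((r + e + m).choose (r + k) : ℝ))
    = 1 / ((((r + e : ℕ) : ℝ) + 1) * ((r + e).choose r : ℝ)) := by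
  intro m
  induction m with
  | zero =>
    rw [Finset.sum_range_one]
    norm_num [div_div]
    ring
  | succ m ih =>
    have hN : r + e + (m + 1) = (r + e + m) + 1 := rfl
    set N : ℕ := r + e + m + 1 with hNdef
    set g : ℕ → ℝ := fun j => 1 / ((N : ℝ) + 1) / (N.choose (r + j) : ℝ) with hg
    have hgoal : ∀ k, (((m + 1).choose k : ℝ) *
        (1 / (((r + e + (m + 1) : ℕ) : ℝ) + 1) / ((r + e + (m + 1)).choose (r + k) : ℝ)))
        = ((m + 1).choose k : ℝ) * g k := fun k => rfl
    have hrec : ∀ k ∈ Finset.range (m + 1), (m.choose k : ℝ) * g (k + 1) + (m.choose k : ℝ) * g k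
        = (m.choose k : ℝ) * (1 / (((r + e + m : ℕ) : ℝ) + 1) / ((r + e + m).choose (r + k) : ℝ)) := by
      intro k hk
      rw [Finset.mem_range] at hk
      have h := grec (r + e + m) (r + k) (by omega)
      rw [← mul_add]
      congr 1
      have h2 : r + (k + 1) = (r + k) + 1 := rfl
      have e1 : g k = 1 / (((r + e + m : ℕ) : ℝ) + 2) / (((r + e + m) + 1).choose (r + k) : ℝ) := by
        simp only [hg, hNdef]
        push_cast; ring_nf
      have e2 : g (k + 1) = 1 / (((r + e + m : ℕ) : ℝ) + 2) / (((r + e + m) + 1).choose ((r + k) + 1) : ℝ) := by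
        simp only [hg, hNdef, ← h2]
        push_cast; ring_nf
      rw [e1, e2, div_div, div_div, add_comm, h, div_div]
    calc ∑ k ∈ Finset.range (m + 1 + 1), ((m + 1).choose k : ℝ) *
          (1 / (((r + e + (m + 1) : ℕ) : ℝ) + 1) / ((r + e + (m + 1)).choose (r + k) : ℝ))
        = ∑ k ∈ Finset.range (m + 1 + 1), ((m + 1).choose k : ℝ) * g k := by
          exact Finset.sum_congr rfl fun k _ => hgoal k
      _ = (∑ k ∈ Finset.range (m + 1), ((m + 1).choose (k + 1) : ℝ) * g (k + 1))
            + ((m + 1).choose 0 : ℝ) * g 0 :=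
          Finset.sum_range_succ' _ (m + 1)
      _ = (∑ k ∈ Finset.range (m + 1),
            ((m.choose k : ℝ) * g (k + 1) + (m.choose (k + 1) : ℝ) * g (k + 1)))
            + (m.choose 0 : ℝ) * g 0 := by
          congr 1
          · exact Finset.sum_congr rfl fun k _ => by
              rw [Nat.choose_succ_succ]; push_cast; ring
          · norm_num
      _ = (∑ k ∈ Finset.range (m + 1), (m.choose k : ℝ) * g (k + 1))
            + ((∑ k ∈ Finset.range (m + 1), (m.choose (k + 1) : ℝ) * g (k + 1))
              + (m.choose 0 : ℝ) * g 0) := by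
          rw [Finset.sum_add_distrib, add_assoc]
      _ = (∑ k ∈ Finset.range (m + 1), (m.choose k : ℝ) * g (k + 1))
            + ∑ k ∈ Finset.range (m + 1 + 1), (m.choose k : ℝ) * g k := by
          rw [← Finset.sum_range_succ' (fun k => (m.choose k : ℝ) * g k) (m + 1)]
      _ = (∑ k ∈ Finset.range (m + 1), (m.choose k : ℝ) * g (k + 1))
            + ∑ k ∈ Finset.range (m + 1), (m.choose k : ℝ) * g k := by
          congr 1
          rw [Finset.sum_range_succ, Nat.choose_succ_self]
          simp
      _ = ∑ k ∈ Finset.range (m + 1),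
            ((m.choose k : ℝ) * g (k + 1) + (m.choose k : ℝ) * g k) := by
          rw [Finset.sum_add_distrib]
      _ = ∑ k ∈ Finset.range (m + 1), (m.choose k : ℝ) *
            (1 / (((r + e + m : ℕ) : ℝ) + 1) / ((r + e + m).choose (r + k) : ℝ)) :=
          Finset.sum_congr rfl hrec
      _ = 1 / ((((r + e : ℕ) : ℝ) + 1) * ((r + e).choose r : ℝ)) := ih

theorem stmt_8 (n : ℕ) (hn : 1 ≤ n) (i : Fin n) (I E : Finset (Fin n))
    (hI : I ⊆ (Finset.univ : Finset (Fin n)) \ {i})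
    (hE : E ⊆ (Finset.univ : Finset (Fin n)) \ {i})
    (hIE : Disjoint I E) :
    ∑ S ∈ (((Finset.univ : Finset (Fin n)) \ {i}).powerset.filter
          (fun S => I ⊆ S ∧ Disjoint E S)),
        (1 : ℝ) / ((n : ℝ) * ((n - 1).choose S.card : ℝ))
      = 1 / ((((I.card + E.card : ℕ) : ℝ) + 1) *
          ((I.card + E.card).choose I.card : ℝ)) := by
  classical
  set U : Finset (Fin n) := (Finset.univ : Finset (Fin n)) \ {i} with hU
  set F : Finset (Fin n) := U \ (I ∪ E) with hF
  have hUcard : U.card = n - 1 := by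
    rw [hU, Finset.card_sdiff_of_subset (by simp), Finset.card_singleton, Finset.card_univ, Fintype.card_fin]
  have hIEU : I ∪ E ⊆ U := Finset.union_subset hI hE
  have hIEcard : (I ∪ E).card = I.card + E.card := Finset.card_union_of_disjoint hIE
  have hFcard : F.card = n - 1 - (I.card + E.card) := by
    rw [hF, Finset.card_sdiff_of_subset hIEU, hUcard, hIEcard]
  have hIEle : I.card + E.card ≤ n - 1 := by
    rw [← hIEcard, ← hUcard]; exact Finset.card_le_card hIEU
  -- Step 1: bijection S ↦ S \ I onto F.powerset
  have step1 : ∑ S ∈ (U.powerset.filter (fun S => I ⊆ S ∧ Disjoint E S)),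
        (1 : ℝ) / ((n : ℝ) * ((n - 1).choose S.card : ℝ))
      = ∑ T ∈ F.powerset, (1 : ℝ) / ((n : ℝ) * ((n - 1).choose (I.card + T.card) : ℝ)) := by
    apply Finset.sum_bij' (fun S _ => S \ I) (fun T _ => T ∪ I)
    · intro S hS
      rw [Finset.mem_filter, Finset.mem_powerset] at hS
      obtain ⟨hSU, hIS, hES⟩ := hS
      rw [Finset.mem_powerset, hF]
      intro x hx
      rw [Finset.mem_sdiff] at hx
      rw [Finset.mem_sdiff, Finset.mem_union]
      refine ⟨hSU hx.1, ?_⟩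
      rintro (hxI | hxE)
      · exact hx.2 hxI
      · exact (Finset.disjoint_left.1 hES) hxE hx.1
    · intro T hT
      rw [Finset.mem_powerset] at hT
      rw [Finset.mem_filter, Finset.mem_powerset]
      have hTU : T ⊆ U := hT.trans (Finset.sdiff_subset)
      have hTIE : Disjoint T (I ∪ E) := Finset.disjoint_left.2 fun x hx =>
        (Finset.mem_sdiff.1 (hT hx)).2
      refine ⟨Finset.union_subset hTU hI, Finset.subset_union_right, ?_⟩
      rw [Finset.disjoint_union_right]
      exact ⟨(Finset.disjoint_of_subset_right Finset.subset_union_right hTIE).symm, hIE.symm⟩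
    · intro S hS
      rw [Finset.mem_filter] at hS
      exact Finset.sdiff_union_of_subset hS.2.1
    · intro T hT
      rw [Finset.mem_powerset] at hT
      have : Disjoint T I := (Finset.disjoint_of_subset_right Finset.subset_union_left
        (Finset.disjoint_left.2 fun x hx => (Finset.mem_sdiff.1 (hT hx)).2))
      rw [Finset.union_sdiff_cancel_right]
      exact this
    · intro S hS
      rw [Finset.mem_filter] at hS
      have hcard : I.card + (S \ I).card = S.card := by
        rw [Finset.card_sdiff_of_subset hS.2.1]
        have := Finset.card_le_card hS.2.1
        omega
      rw [hcard]
  rw [step1]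
  -- Step 2: group by cardinality
  rw [show (fun T : Finset (Fin n) => (1 : ℝ) / ((n : ℝ) * ((n - 1).choose (I.card + T.card) : ℝ)))
      = (fun T => (fun j => (1 : ℝ) / ((n : ℝ) * ((n - 1).choose (I.card + j) : ℝ))) T.card) from rfl]
  rw [Finset.sum_powerset_apply_card
    (fun j => (1 : ℝ) / ((n : ℝ) * ((n - 1).choose (I.card + j) : ℝ)))]
  -- Step 3: apply key lemma with r = I.card, e = E.card, m = F.card
  have hn1 : n - 1 = I.card + E.card + F.card := by
    rw [hFcard]; omega
  have hkey := key I.card E.card F.card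
  rw [← hn1] at hkey
  rw [← hkey]
  have hncast : ((n : ℝ)) = ((n - 1 : ℕ) : ℝ) + 1 := by
    have h : n = (n - 1) + 1 := by omega
    conv_lhs => rw [h]
    push_cast; ring
  apply Finset.sum_congr rfl
  intro k _
  rw [nsmul_eq_mul, hncast, div_div]
end

section
/- Let f(x) = wᵀx + b be a linear function on ℝ^n, fix x ∈ ℝ^n and a finite background set D with mean z̄. Then the Shapley value φ_i := ∑_{S ⊆ [n]\{i}} (|S|!(n-|S|-1)!/n!) · (v(S ∪ {i}) − v(S)), with v(S) := E_{z ∼ D}[f(x_S ; z_{S̄})], equals w_i · (x_i − z̄_i). -/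
open Finset

lemma weight_sum_aux (n : ℕ) (i : Fin n) :
    ∑ S ∈ ((Finset.univ : Finset (Fin n)) \ {i}).powerset,
        ((S.card.factorial * (n - S.card - 1).factorial : ℕ) : ℝ) / (n.factorial : ℝ) = 1 := by
  have hn : 1 ≤ n := i.pos
  have hcard : ((Finset.univ : Finset (Fin n)) \ {i}).card = n - 1 := by
    rw [Finset.card_sdiff_of_subset (by simp), Finset.card_univ, Finset.card_singleton]
    simp
  rw [Finset.sum_powerset_apply_card
    (fun k => ((k.factorial * (n - k - 1).factorial : ℕ) : ℝ) / (n.factorial : ℝ)), hcard]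
  simp only [nsmul_eq_mul]
  have h1 : ∀ k ∈ Finset.range (n - 1 + 1),
      ((n-1).choose k : ℝ) * (((k.factorial * (n - k - 1).factorial : ℕ) : ℝ) / (n.factorial : ℝ))
        = ((n-1).choose k : ℝ) * (((k.factorial * (n - k - 1).factorial : ℕ) : ℝ) / (n.factorial : ℝ)) :=
    fun k _ => rfl
  have h2 : ∀ k ∈ Finset.range (n - 1 + 1),
      ((n-1).choose k : ℝ) * (((k.factorial * (n - k - 1).factorial : ℕ) : ℝ) / (n.factorial : ℝ))
        = ((n-1).factorial : ℝ) / (n.factorial : ℝ) := by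
    intro k hk
    have hkle : k ≤ n - 1 := Nat.lt_succ_iff.mp (Finset.mem_range.mp hk)
    have hfac : (n-1).choose k * (k.factorial * (n - 1 - k).factorial) = (n-1).factorial := by
      rw [← Nat.choose_mul_factorial_mul_factorial hkle]; ring
    have hsub : n - k - 1 = n - 1 - k := by omega
    rw [hsub, ← hfac]
    push_cast
    ring
  rw [Finset.sum_congr rfl h2, Finset.sum_const, Finset.card_range, nsmul_eq_mul]
  have hfn : (n.factorial : ℝ) ≠ 0 := Nat.cast_ne_zero.mpr n.factorial_ne_zero
  have hne : n - 1 + 1 = n := by omega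
  rw [hne]
  field_simp
  rw [← Nat.cast_mul, Nat.mul_factorial_pred (by omega)]

theorem stmt_10 (n : ℕ) (w : Fin n → ℝ) (b : ℝ) (x : Fin n → ℝ)
    (D : Finset (Fin n → ℝ)) (hD : D.Nonempty)
    (f : (Fin n → ℝ) → ℝ) (hf : ∀ y, f y = (∑ j, w j * y j) + b)
    (v : Finset (Fin n) → ℝ)
    (hv : ∀ S : Finset (Fin n),
      v S = (∑ z ∈ D, f (fun j => if j ∈ S then x j else z j)) / D.card)
    (i : Fin n) :
    ∑ S ∈ ((Finset.univ : Finset (Fin n)) \ {i}).powerset,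
        ((S.card.factorial * (n - S.card - 1).factorial : ℕ) : ℝ) / (n.factorial : ℝ)
          * (v (insert i S) - v S)
      = w i * (x i - (∑ z ∈ D, z i) / D.card) := by
  have hcD : (D.card : ℝ) ≠ 0 := Nat.cast_ne_zero.mpr (Finset.card_ne_zero_of_mem hD.choose_spec)
  have key : ∀ S ∈ ((Finset.univ : Finset (Fin n)) \ {i}).powerset,
      v (insert i S) - v S = w i * (x i - (∑ z ∈ D, z i) / D.card) := by
    intro S hS
    have hiS : i ∉ S := fun h => by
      have := Finset.mem_powerset.mp hS h
      simp at this
    rw [hv, hv, div_sub_div_same, ← Finset.sum_sub_distrib]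
    have hz : ∀ z ∈ D,
        f (fun j => if j ∈ insert i S then x j else z j)
          - f (fun j => if j ∈ S then x j else z j) = w i * (x i - z i) := by
      intro z _
      rw [hf, hf]
      have : ∀ j : Fin n,
          w j * (if j ∈ insert i S then x j else z j) - w j * (if j ∈ S then x j else z j)
            = if j = i then w i * (x i - z i) else 0 := by
        intro j
        by_cases hji : j = i
        · subst hji
          simp [hiS]
          ring
        · simp [hji, Finset.mem_insert]
      calc ((∑ j, w j * (if j ∈ insert i S then x j else z j)) + b)
            - ((∑ j, w j * (if j ∈ S then x j else z j)) + b)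
          = ∑ j, (w j * (if j ∈ insert i S then x j else z j)
              - w j * (if j ∈ S then x j else z j)) := by
            rw [Finset.sum_sub_distrib]; ring
        _ = ∑ j, if j = i then w i * (x i - z i) else 0 := by
            exact Finset.sum_congr rfl (fun j _ => this j)
        _ = w i * (x i - z i) := by simp
    rw [Finset.sum_congr rfl hz]
    simp only [mul_sub, Finset.sum_sub_distrib, Finset.sum_const, nsmul_eq_mul,
      ← Finset.mul_sum]
    field_simp
  rw [Finset.sum_congr rfl (fun S hS => by rw [key S hS]), ← Finset.sum_mul, weight_sum_aux,
    one_mul]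
end

section
/- Let I, E ⊆ {1, ..., n} be disjoint with i ∈ I, and let B := {S ⊆ {1, ..., n} : I ⊆ S, E ∩ S = ∅}. Let r := |I|, s := |I| + |E|. Then ∑_{S ∈ B} w(|S| − 1) = ((s+1)/r) · 1/((s+1) · C(s, r)), where w(k) := 1/(n · C(n-1, k)); equivalently, ∑_{S ∈ B} w(|S| − 1) = 1/(r · C(s, r)). -/
open Finset

lemma aux_hn1 (t e : ℕ) :
    (t+1) * ((t+e+2).choose (t+1)) = (t+e+2) * ((t+e+1).choose t) := by
  have h := Nat.add_one_mul_choose_eq (t+e+1) t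
  rw [show t+e+2 = t+e+1+1 from rfl, h, Nat.mul_comm]

lemma aux_hn2 (t e : ℕ) :
    (t+2) * ((t+e+2).choose (t+2)) = (t+e+2) * ((t+e+1).choose (t+1)) := by
  have h := Nat.add_one_mul_choose_eq (t+e+1) (t+1)
  rw [show t+e+2 = t+e+1+1 from rfl, show t+2 = t+1+1 from rfl, h, Nat.mul_comm]

lemma aux_hn3 (t e : ℕ) :
    (t+1) * ((t+e+1).choose (t+1)) = (t+e+1) * ((t+e).choose t) := by
  have h := Nat.add_one_mul_choose_eq (t+e) t
  rw [show t+e+1 = t+e+1 from rfl, h, Nat.mul_comm]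

-- nat identity: (t+e+1) C(t+e,t) C(t+e+2,t+1) = (t+e+2) C(t+e+1,t) C(t+e+1,t+1)
lemma aux_nat_id (t e : ℕ) :
    (t+e+1) * ((t+e).choose t) * ((t+e+2).choose (t+1)) =
    (t+e+2) * ((t+e+1).choose t) * ((t+e+1).choose (t+1)) := by
  apply Nat.eq_of_mul_eq_mul_left (Nat.succ_pos t)
  calc (t+1) * ((t+e+1) * ((t+e).choose t) * ((t+e+2).choose (t+1)))
      = ((t+e+1) * ((t+e).choose t)) * ((t+1) * ((t+e+2).choose (t+1))) := by ring
    _ = ((t+e+1) * ((t+e).choose t)) * ((t+e+2) * ((t+e+1).choose t)) := by rw [aux_hn1]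
    _ = ((t+1) * ((t+e+1).choose (t+1))) * ((t+e+2) * ((t+e+1).choose t)) := by rw [aux_hn3]
    _ = (t+1) * ((t+e+2) * ((t+e+1).choose t) * ((t+e+1).choose (t+1))) := by ring

lemma aux_real_step (t e : ℕ) :
    1 / (((t:ℝ)+1) * (((t+e+2).choose (t+1) : ℕ) : ℝ))
      + 1 / (((t:ℝ)+2) * (((t+e+2).choose (t+2) : ℕ) : ℝ))
      = 1 / (((t:ℝ)+1) * (((t+e+1).choose (t+1) : ℕ) : ℝ)) := by
  have k1 : ((t:ℝ)+1) * (((t+e+2).choose (t+1) : ℕ) : ℝ)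
      = (((t:ℝ)+(e:ℝ)+2)) * (((t+e+1).choose t : ℕ) : ℝ) := by
    exact_mod_cast congrArg (Nat.cast : ℕ → ℝ) (aux_hn1 t e)
  have k2 : ((t:ℝ)+2) * (((t+e+2).choose (t+2) : ℕ) : ℝ)
      = (((t:ℝ)+(e:ℝ)+2)) * (((t+e+1).choose (t+1) : ℕ) : ℝ) := by
    exact_mod_cast congrArg (Nat.cast : ℕ → ℝ) (aux_hn2 t e)
  have k3 : ((t:ℝ)+1) * (((t+e+1).choose (t+1) : ℕ) : ℝ)
      = (((t:ℝ)+(e:ℝ)+1)) * (((t+e).choose t : ℕ) : ℝ) := by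
    exact_mod_cast congrArg (Nat.cast : ℕ → ℝ) (aux_hn3 t e)
  rw [k1, k2, k3]
  have pa : (0:ℝ) < (((t+e+1).choose t : ℕ) : ℝ) := by
    exact_mod_cast Nat.choose_pos (by omega)
  have pb : (0:ℝ) < (((t+e+1).choose (t+1) : ℕ) : ℝ) := by
    exact_mod_cast Nat.choose_pos (by omega)
  have pc : (0:ℝ) < (((t+e).choose t : ℕ) : ℝ) := by
    exact_mod_cast Nat.choose_pos (by omega)
  have hid : (((t:ℝ)+(e:ℝ)+1)) * (((t+e).choose t : ℕ) : ℝ) * (((t+e+2).choose (t+1) : ℕ) : ℝ)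
      = (((t:ℝ)+(e:ℝ)+2)) * (((t+e+1).choose t : ℕ) : ℝ) * (((t+e+1).choose (t+1) : ℕ) : ℝ) := by
    exact_mod_cast congrArg (Nat.cast : ℕ → ℝ) (aux_nat_id t e)
  have pascal : (((t+e+2).choose (t+1) : ℕ) : ℝ)
      = (((t+e+1).choose t : ℕ) : ℝ) + (((t+e+1).choose (t+1) : ℕ) : ℝ) := by
    exact_mod_cast congrArg (Nat.cast : ℕ → ℝ) (Nat.choose_succ_succ (t+e+1) t)
  rw [pascal] at hid
  have hs2 : ((t:ℝ)+(e:ℝ)+2) ≠ 0 := by positivity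
  have hs1 : ((t:ℝ)+(e:ℝ)+1) ≠ 0 := by positivity
  field_simp
  nlinarith [hid, pa, pb, pc]

lemma sum_pascal_split (m : ℕ) (f : ℕ → ℝ) :
    ∑ k ∈ range (m+2), (((m+1).choose k : ℕ) : ℝ) * f k
      = ∑ k ∈ range (m+1), ((m.choose k : ℕ) : ℝ) * f k
        + ∑ k ∈ range (m+1), ((m.choose k : ℕ) : ℝ) * f (k+1) := by
  rw [Finset.sum_range_succ' (fun k => (((m+1).choose k : ℕ) : ℝ) * f k) (m+1)]
  have expand : ∀ k : ℕ, (((m+1).choose (k+1) : ℕ) : ℝ)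
      = ((m.choose k : ℕ) : ℝ) + ((m.choose (k+1) : ℕ) : ℝ) := by
    intro k; exact_mod_cast congrArg (Nat.cast : ℕ → ℝ) (Nat.choose_succ_succ m k)
  simp only [expand, add_mul]
  rw [Finset.sum_add_distrib]
  rw [Finset.sum_range_succ (fun k => ((m.choose (k+1) : ℕ) : ℝ) * f (k+1)) m]
  rw [Finset.sum_range_succ' (fun k => ((m.choose k : ℕ) : ℝ) * f k) m]
  simp [Nat.choose_succ_self]
  ring

lemma aux_key (m : ℕ) : ∀ t e N : ℕ, N = t+1+e+m →
    ∑ k ∈ range (m+1), ((m.choose k : ℕ) : ℝ)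
        * (1 / ((N : ℝ) * (((N-1).choose (t+k) : ℕ) : ℝ)))
      = 1 / (((t:ℝ)+1) * (((t+1+e).choose (t+1) : ℕ) : ℝ)) := by
  induction m with
  | zero =>
    intro t e N hN
    subst hN
    rw [Finset.sum_range_one]
    simp only [Nat.add_zero, Nat.choose_zero_right, Nat.cast_one, one_mul]
    rw [show t+1+e-1 = t+e from by omega]
    have k3 : ((t:ℝ)+1) * (((t+1+e).choose (t+1) : ℕ) : ℝ)
        = (((t+1+e : ℕ)) : ℝ) * (((t+e).choose t : ℕ) : ℝ) := by
      have h : (t+1) * ((t+1+e).choose (t+1)) = (t+1+e) * ((t+e).choose t) := by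
        rw [show t+1+e = t+e+1 from by ring]; exact aux_hn3 t e
      exact_mod_cast congrArg (Nat.cast : ℕ → ℝ) h
    rw [k3]
  | succ m ih =>
    intro t e N hN
    subst hN
    rw [sum_pascal_split m (fun k => 1 / (((t+1+e+(m+1) : ℕ) : ℝ)
        * (((t+1+e+(m+1)-1).choose (t+k) : ℕ) : ℝ)))]
    have h1 : ∑ k ∈ range (m+1), ((m.choose k : ℕ) : ℝ)
          * (1 / (((t+1+e+(m+1) : ℕ) : ℝ) * (((t+1+e+(m+1)-1).choose (t+k) : ℕ) : ℝ)))
        = 1 / (((t:ℝ)+1) * (((t+1+(e+1)).choose (t+1) : ℕ) : ℝ)) :=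
      ih t (e+1) (t+1+e+(m+1)) (by omega)
    have h2 : ∑ k ∈ range (m+1), ((m.choose k : ℕ) : ℝ)
          * (1 / (((t+1+e+(m+1) : ℕ) : ℝ) * (((t+1+e+(m+1)-1).choose (t+(k+1)) : ℕ) : ℝ)))
        = 1 / ((((t+1 : ℕ)):ℝ)+1) / ((((t+1)+1+e).choose ((t+1)+1) : ℕ) : ℝ) := by
      rw [div_div]
      have := ih (t+1) e (t+1+e+(m+1)) (by omega)
      rw [← this]
      apply Finset.sum_congr rfl
      intro k _
      rw [show t+(k+1) = t+1+k from by omega]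
    rw [h1, h2]
    have step := aux_real_step t e
    rw [show t+e+2 = t+1+(e+1) from by ring] at step
    rw [div_div]
    have c1 : ((((t+1 : ℕ)):ℝ)+1) * ((((t+1)+1+e).choose ((t+1)+1) : ℕ) : ℝ)
        = ((t:ℝ)+2) * (((t+1+(e+1)).choose (t+2) : ℕ) : ℝ) := by
      rw [show (t+1)+1+e = t+1+(e+1) from by ring, show (t+1)+1 = t+2 from rfl]
      push_cast
      ring
    rw [c1]
    rw [show t+1+e = t+e+1 from by ring]
    exact step

theorem stmt_12 (n : ℕ) (hn : 1 ≤ n) (i : Fin n) (I E : Finset (Fin n))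
    (hIE : Disjoint I E) (hiI : i ∈ I) :
    ∑ S ∈ ((Finset.univ : Finset (Fin n)).powerset.filter
          (fun S => I ⊆ S ∧ Disjoint E S)),
        (1 : ℝ) / ((n : ℝ) * ((n - 1).choose (S.card - 1) : ℝ))
      = 1 / ((I.card : ℝ) * ((I.card + E.card).choose I.card : ℝ)) := by
  classical
  set U : Finset (Fin n) := Finset.univ \ (I ∪ E) with hU
  obtain ⟨t, ht⟩ : ∃ t, I.card = t + 1 :=
    ⟨I.card - 1, by have := Finset.card_pos.mpr ⟨i, hiI⟩; omega⟩
  set e := E.card with he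
  set m := U.card with hm
  have hUI : Disjoint U I := by
    simp only [hU]
    exact Finset.sdiff_disjoint.mono_right Finset.subset_union_left
  have hUE : Disjoint U E := by
    simp only [hU]
    exact Finset.sdiff_disjoint.mono_right Finset.subset_union_right
  have hcard : n = t + 1 + e + m := by
    have h1 : (I ∪ E).card = (t+1) + e := by
      rw [Finset.card_union_of_disjoint hIE, ht]
    have h2 : U.card = n - ((t+1)+e) := by
      rw [hU, Finset.card_sdiff_of_subset (Finset.subset_univ _), Finset.card_univ, Fintype.card_fin, h1]
    have h3 : (I ∪ E).card ≤ n := by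
      calc (I ∪ E).card ≤ (Finset.univ : Finset (Fin n)).card :=
            Finset.card_le_card (Finset.subset_univ _)
        _ = n := by simp
    omega
  have hre : ∑ S ∈ ((Finset.univ : Finset (Fin n)).powerset.filter
          (fun S => I ⊆ S ∧ Disjoint E S)),
        (1 : ℝ) / ((n : ℝ) * ((n - 1).choose (S.card - 1) : ℝ))
      = ∑ T ∈ U.powerset, (1 : ℝ) / ((n : ℝ) * ((n - 1).choose (t + T.card) : ℝ)) := by
    apply Finset.sum_nbij' (fun S => S \ I) (fun T => T ∪ I)
    · intro S hS
      simp only [Finset.mem_filter, Finset.mem_powerset] at hS ⊢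
      obtain ⟨-, hIS, hES⟩ := hS
      intro x hx
      simp only [Finset.mem_sdiff] at hx
      simp only [hU, Finset.mem_sdiff, Finset.mem_union, Finset.mem_univ, true_and]
      rintro (h | h)
      · exact hx.2 h
      · exact (Finset.disjoint_left.mp hES h) hx.1
    · intro T hT
      simp only [Finset.mem_powerset] at hT
      simp only [Finset.mem_filter, Finset.mem_powerset]
      exact ⟨Finset.subset_univ _, Finset.subset_union_right,
        Finset.disjoint_union_right.mpr ⟨(hUE.mono_left hT).symm, hIE.symm⟩⟩
    · intro S hS
      simp only [Finset.mem_filter, Finset.mem_powerset] at hS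
      exact Finset.sdiff_union_of_subset hS.2.1
    · intro T hT
      simp only [Finset.mem_powerset] at hT
      exact Finset.union_sdiff_cancel_right (hUI.mono_left hT)
    · intro S hS
      simp only [Finset.mem_filter, Finset.mem_powerset] at hS
      have hc : (S \ I).card = S.card - (t+1) := by
        rw [Finset.card_sdiff_of_subset hS.2.1, ht]
      have hle : t + 1 ≤ S.card := ht ▸ Finset.card_le_card hS.2.1
      rw [hc, show t + (S.card - (t+1)) = S.card - 1 from by omega]
  rw [hre]
  rw [Finset.sum_powerset U (fun T => (1 : ℝ) / ((n : ℝ) * ((n - 1).choose (t + T.card) : ℝ)))]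
  have hgrp : ∀ j ∈ range (m+1),
      ∑ T ∈ Finset.powersetCard j U, (1 : ℝ) / ((n : ℝ) * ((n - 1).choose (t + T.card) : ℝ))
      = ((m.choose j : ℕ) : ℝ) * ((1 : ℝ) / ((n : ℝ) * ((n - 1).choose (t + j) : ℝ))) := by
    intro j hj
    rw [Finset.sum_powersetCard j U (fun c => (1 : ℝ) / ((n : ℝ) * ((n - 1).choose (t + c) : ℝ)))]
    rw [nsmul_eq_mul, ← hm]
  rw [← hm, Finset.sum_congr rfl hgrp]
  rw [aux_key m t e n hcard, ht, he]
  push_cast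
  ring_nf
end

section
/- Let I, E ⊆ {1, ..., n} be disjoint with i ∈ E, and let B := {S ⊆ {1, ..., n} : I ⊆ S, E ∩ S = ∅}. Let r := |I|, s := |I| + |E|. Then ∑_{S ∈ B} w(|S|) = 1/((s−r) · C(s, r)) with w(k) := 1/(n · C(n-1, k)). -/
open Finset

noncomputable def gw (n k : ℕ) : ℝ := 1 / (((n:ℝ) + 1) * (n.choose k : ℝ))

lemma gw_rec (n k : ℕ) (h : k ≤ n) :
    gw n k = gw (n+1) k + gw (n+1) (k+1) := by
  have hA : (0:ℝ) < (n.choose k : ℝ) := by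
    exact_mod_cast Nat.choose_pos h
  have hB : (0:ℝ) < ((n+1).choose k : ℝ) := by
    exact_mod_cast Nat.choose_pos (h.trans (Nat.le_succ n))
  have hC : (0:ℝ) < ((n+1).choose (k+1) : ℝ) := by
    exact_mod_cast Nat.choose_pos (Nat.succ_le_succ h)
  have e1 : ((n:ℝ)+1) * (n.choose k : ℝ) = ((n+1).choose (k+1) : ℝ) * ((k:ℝ)+1) := by
    exact_mod_cast Nat.add_one_mul_choose_eq n k
  have e2 : ((n+1).choose (k+1) : ℝ) * ((k:ℝ)+1) = ((n+1).choose k : ℝ) * (((n:ℝ)+1) - (k:ℝ)) := by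
    have := Nat.choose_succ_right_eq (n+1) k
    have h2 : ((n+1).choose (k+1) : ℝ) * ((k:ℝ)+1) = ((n+1).choose k : ℝ) * ((n+1-k : ℕ) : ℝ) := by
      exact_mod_cast this
    rw [h2]
    congr 1
    push_cast [Nat.le_succ_of_le h]
    ring
  unfold gw
  have hn1 : ((n:ℝ)+1) ≠ 0 := by positivity
  have hn2 : ((n:ℝ)+1+1) ≠ 0 := by positivity
  push_cast
  rw [div_add_div _ _ (mul_pos (by positivity) hB).ne' (mul_pos (by positivity) hC).ne', div_eq_div_iff (mul_pos (by positivity) hA).ne' (mul_pos (mul_pos (by positivity) hB) (mul_pos (by positivity) hC)).ne']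
  linear_combination (-((n:ℝ)+2))*((((n+1).choose k : ℝ)) + (((n+1).choose (k+1) : ℝ)))*e1 + (-((n:ℝ)+2))*(((n+1).choose (k+1) : ℝ))*e2

lemma gw_sum (m : ℕ) : ∀ n k : ℕ, k ≤ n →
    ∑ j ∈ range (m+1), (m.choose j : ℝ) * gw (n+m) (k+j) = gw n k := by
  induction m with
  | zero => intro n k h; simp
  | succ m ih =>
    intro n k h
    have key : ∀ j ∈ range (m+1),
        (m.choose j : ℝ) * gw (n+m) (k+j)
          = (m.choose j : ℝ) * gw (n+m+1) (k+j)
            + (m.choose j : ℝ) * gw (n+m+1) (k+j+1) := by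
      intro j hj
      rw [mem_range] at hj
      rw [gw_rec (n+m) (k+j) (by omega)]
      ring
    have h2 := Finset.sum_congr rfl key
    rw [← ih n k h, h2, Finset.sum_add_distrib,
      Finset.sum_range_succ' _ (m+1)]
    have e0 : ∀ j, (((m+1).choose (j+1) : ℕ) : ℝ) = (m.choose j : ℝ) + (m.choose (j+1) : ℝ) := by
      intro j; exact_mod_cast Nat.choose_succ_succ' m j
    simp only [e0, add_mul, Finset.sum_add_distrib, Nat.choose_zero_right, Nat.cast_one, one_mul,
      Nat.add_zero, ← Nat.add_assoc]
    rw [Finset.sum_range_succ' (fun j => (m.choose j:ℝ) * gw (n+m+1) (k+j)) m]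
    rw [Finset.sum_range_succ (fun j => (m.choose (j+1):ℝ) * gw (n+m+1) (k+j+1)) m]
    simp only [Nat.choose_succ_self, Nat.cast_zero, zero_mul, add_zero, Nat.choose_zero_right,
      Nat.cast_one, one_mul, Nat.add_zero]
    simp only [← Nat.add_assoc]
    ring

theorem stmt_13 (n : ℕ) (hn : 1 ≤ n) (i : Fin n) (I E : Finset (Fin n))
    (hIE : Disjoint I E) (hiE : i ∈ E) :
    ∑ S ∈ ((Finset.univ : Finset (Fin n)).powerset.filter
          (fun S => I ⊆ S ∧ Disjoint E S)),
        (1 : ℝ) / ((n : ℝ) * ((n - 1).choose S.card : ℝ))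
      = 1 / ((((I.card + E.card : ℕ) : ℝ) - (I.card : ℝ)) *
          ((I.card + E.card).choose I.card : ℝ)) := by
  classical
  set r := I.card with hr
  set d := E.card with hd
  have hd1 : 1 ≤ d := Finset.card_pos.mpr ⟨i, hiE⟩
  set A : Finset (Fin n) := Finset.univ \ (I ∪ E) with hA
  have hs_le : r + d ≤ n := by
    have := Finset.card_union_of_disjoint hIE
    calc r + d = (I ∪ E).card := this.symm
      _ ≤ (Finset.univ : Finset (Fin n)).card := Finset.card_le_card (Finset.subset_univ _)
      _ = n := by simp
  have hAcard : A.card = n - (r + d) := by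
    rw [hA, Finset.card_sdiff_of_subset (Finset.subset_univ _)]
    simp [Finset.card_union_of_disjoint hIE, hr, hd]
  -- Step 1: reindex sum over powerset of A
  have step1 : ∑ S ∈ ((Finset.univ : Finset (Fin n)).powerset.filter
          (fun S => I ⊆ S ∧ Disjoint E S)),
        (1 : ℝ) / ((n : ℝ) * ((n - 1).choose S.card : ℝ))
      = ∑ T ∈ A.powerset, (1 : ℝ) / ((n : ℝ) * ((n - 1).choose (r + T.card) : ℝ)) := by
    apply Finset.sum_nbij' (fun S => S \ I) (fun T => T ∪ I)
    · intro S hS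
      rw [Finset.mem_filter] at hS
      rw [Finset.mem_powerset]
      intro x hx
      rw [Finset.mem_sdiff] at hx
      rw [hA, Finset.mem_sdiff, Finset.mem_union]
      refine ⟨Finset.mem_univ _, ?_⟩
      rintro (h1 | h2)
      · exact hx.2 h1
      · exact (Finset.disjoint_left.mp hS.2.2) h2 hx.1
    · intro T hT
      rw [Finset.mem_powerset] at hT
      rw [Finset.mem_filter, Finset.mem_powerset]
      refine ⟨Finset.subset_univ _, Finset.subset_union_right, ?_⟩
      rw [Finset.disjoint_left]
      intro x hxE hxTI
      rw [Finset.mem_union] at hxTI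
      rcases hxTI with h1 | h2
      · have := hT h1
        rw [hA, Finset.mem_sdiff, Finset.mem_union] at this
        exact this.2 (Or.inr hxE)
      · exact Finset.disjoint_left.mp hIE h2 hxE
    · intro S hS
      rw [Finset.mem_filter] at hS
      exact Finset.sdiff_union_of_subset hS.2.1
    · intro T hT
      rw [Finset.mem_powerset] at hT
      apply Finset.union_sdiff_cancel_right
      rw [Finset.disjoint_left]
      intro x hxT hxI
      have := hT hxT
      rw [hA, Finset.mem_sdiff, Finset.mem_union] at this
      exact this.2 (Or.inl hxI)
    · intro S hS
      rw [Finset.mem_filter] at hS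
      have hle := Finset.card_le_card hS.2.1
      have hcard : r + (S.card - I.card) = S.card := by omega
      rw [Finset.card_sdiff_of_subset hS.2.1, hcard]
  rw [step1]
  -- Step 2: group by cardinality
  have step2 : ∑ T ∈ A.powerset, (1 : ℝ) / ((n : ℝ) * ((n - 1).choose (r + T.card) : ℝ))
      = ∑ j ∈ range (A.card + 1),
          (A.card.choose j : ℝ) * ((1 : ℝ) / ((n : ℝ) * ((n - 1).choose (r + j) : ℝ))) := by
    rw [Finset.powerset_card_disjiUnion]; erw [Finset.sum_disjiUnion]
    refine Finset.sum_congr rfl fun j hj => ?_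
    have : ∀ T ∈ Finset.powersetCard j A,
        (1 : ℝ) / ((n : ℝ) * ((n - 1).choose (r + T.card) : ℝ))
          = (1 : ℝ) / ((n : ℝ) * ((n - 1).choose (r + j) : ℝ)) := by
      intro T hT
      rw [(Finset.mem_powersetCard.mp hT).2]
    rw [Finset.sum_congr rfl this, Finset.sum_const, Finset.card_powersetCard,
      nsmul_eq_mul]
  rw [step2]
  -- Step 3: identify with gw and apply gw_sum
  have hcastn : ((n - 1 : ℕ) : ℝ) + 1 = (n : ℝ) := by
    rw [Nat.cast_sub hn]; ring
  have hgw : ∀ k : ℕ, (1 : ℝ) / ((n : ℝ) * ((n - 1).choose k : ℝ)) = gw (n-1) k := by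
    intro k; rw [gw, hcastn]
  have hnn : (r + d - 1) + A.card = n - 1 := by omega
  have key := gw_sum A.card (r + d - 1) r (by omega)
  rw [hnn] at key
  calc ∑ j ∈ range (A.card + 1),
          (A.card.choose j : ℝ) * ((1 : ℝ) / ((n : ℝ) * ((n - 1).choose (r + j) : ℝ)))
      = ∑ j ∈ range (A.card + 1), (A.card.choose j : ℝ) * gw (n-1) (r + j) := by
        refine Finset.sum_congr rfl fun j _ => ?_; rw [hgw]
    _ = gw (r + d - 1) r := key
    _ = 1 / ((((r + d : ℕ) : ℝ) - (r : ℝ)) * ((r + d).choose r : ℝ)) := by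
        rw [gw]
        have hc1 : ((r + d - 1 : ℕ) : ℝ) + 1 = ((r + d : ℕ) : ℝ) := by
          have : r + d - 1 + 1 = r + d := by omega
          exact_mod_cast congrArg (Nat.cast : ℕ → ℝ) this
        rw [hc1]
        have hnat : (r + d) * ((r + d - 1).choose r) = d * ((r + d).choose r) := by
          have h1 := Nat.add_one_mul_choose_eq (r + d - 1) r
          have h2 := Nat.choose_succ_right_eq (r + d) r
          have h3 : r + d - 1 + 1 = r + d := by omega
          rw [h3] at h1
          have h4 : r + d - r = d := by omega
          rw [h4] at h2
          rw [h1, h2, Nat.mul_comm]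
        have hcast2 : ((r + d : ℕ) : ℝ) * ((r + d - 1).choose r : ℝ)
            = (d : ℝ) * ((r + d).choose r : ℝ) := by exact_mod_cast hnat
        rw [hcast2]
        congr 2
        push_cast
        ring
end

section
/- Let n ≥ 1 and i ∈ {1, ..., n}. Suppose B_1, ..., B_K is a partition of the full power set of {1, ..., n}, where each B_j is defined by disjoint included/excluded feature sets I_j, E_j ⊆ {1, ..., n} via B_j = {S : I_j ⊆ S, E_j ∩ S = ∅}. Let v be a value function with per-branch bounds l_j ≤ v(S) ≤ u_j for all S ∈ B_j, and classify branches as B_{+i} (i ∈ I_j), B_{−i} (i ∈ E_j), B_{±i} (otherwise). With Λ_j := 1/((s_j+1)·C(s_j, r_j)), Λ_j^− := Λ_j·(s_j+1)/r_j, Λ_j^+ := Λ_j·(s_j+1)/(s_j−r_j), where r_j := |I_j|, s_j := |I_j|+|E_j|, the Shapley value φ_i := ∑_{S ⊆ [n]\{i}} w(|S|)·(v(S ∪ {i}) − v(S)) with w(k) := 1/(n·C(n-1,k)) satisfies: ∑_{j ∈ +i} Λ_j^− l_j + ∑_{j ∈ ±i} Λ_j (l_j − u_j) − ∑_{j ∈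 −i} Λ_j^+ u_j ≤ φ_i ≤ ∑_{j ∈ +i} Λ_j^− u_j + ∑_{j ∈ ±i} Λ_j (u_j − l_j) − ∑_{j ∈ −i} Λ_j^+ l_j. -/
open Finset

private lemma pair_id' (m j : ℕ) (hj : j ≤ m) :
    (1:ℝ)/((m+1).choose j) + 1/((m+1).choose (j+1)) =
      (m+2)/((m+1) * (m.choose j)) := by
  have h0 : ((m+1).choose j : ℝ) ≠ 0 := by
    exact_mod_cast (Nat.choose_pos (by omega : j ≤ m+1)).ne'
  have h1 : ((m+1).choose (j+1) : ℝ) ≠ 0 := by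
    exact_mod_cast (Nat.choose_pos (by omega : j+1 ≤ m+1)).ne'
  have h2 : ((m:ℝ)+1) * (m.choose j) ≠ 0 := by
    have := (Nat.choose_pos hj).ne'
    positivity
  have hA : ((m+1).choose (j+1) : ℝ) * (j+1) = (m+1) * m.choose j := by
    exact_mod_cast congrArg (Nat.cast (R := ℝ))
      (Nat.add_one_mul_choose_eq m j).symm
  have hB : ((m+1).choose j : ℝ) * ((m:ℝ)+1-j) = (m+1) * m.choose j := by
    have h := Nat.choose_succ_right_eq (m+1) j
    have h' : ((m+1).choose (j+1) : ℝ) * (j+1) = ((m+1).choose j : ℝ) * ((m+1) - j : ℕ) := by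
      exact_mod_cast congrArg (Nat.cast (R := ℝ)) h
    rw [Nat.cast_sub (by omega)] at h'
    push_cast at h' ⊢
    linarith [hA, h']
  rw [div_add_div _ _ h0 h1, div_eq_div_iff (by positivity) h2]
  nlinarith [hA, hB]

private lemma key_id' (a b : ℕ) : ∀ f : ℕ,
    ∑ k ∈ Finset.range (f+1), ((f.choose k : ℝ))/((f+a+b).choose (a+k))
      = (f+a+b+1)/((a+b+1) * ((a+b).choose a)) := by
  intro f
  induction f with
  | zero =>
    have h2 : (((a+b).choose a : ℝ)) ≠ 0 := by
      exact_mod_cast (Nat.choose_pos (by omega : a ≤ a+b)).ne'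
    rw [Finset.sum_range_one]
    norm_num
    rw [eq_div_iff (by positivity), inv_mul_eq_div,
      mul_div_assoc, div_self h2, mul_one]
  | succ f ih =>
    have hD : (((a+b).choose a : ℝ)) ≠ 0 := by
      exact_mod_cast (Nat.choose_pos (by omega : a ≤ a+b)).ne'
    have h1 : ∑ k ∈ Finset.range (f+1+1), (((f+1).choose k : ℝ))/(((f+1+a+b).choose (a+k)))
        = ∑ k ∈ Finset.range (f+1), (f.choose k : ℝ) *
            ((1:ℝ)/((f+a+b+1).choose (a+k)) + 1/((f+a+b+1).choose (a+k+1))) := by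
      simp only [show f+1+a+b = f+a+b+1 from by omega]
      rw [Finset.sum_range_succ' (fun k => (((f+1).choose k : ℝ))/(((f+a+b+1).choose (a+k)))) (f+1)]
      have expand : ∀ k ∈ Finset.range (f+1),
          (((f+1).choose (k+1) : ℝ))/(((f+a+b+1).choose (a+(k+1))))
            = ((f.choose k : ℝ))/((f+a+b+1).choose (a+k+1))
              + ((f.choose (k+1) : ℝ))/((f+a+b+1).choose (a+(k+1))) := by
        intro k _
        rw [Nat.choose_succ_succ]
        push_cast
        rw [add_div, show a+(k+1) = a+k+1 from by ring]
      rw [Finset.sum_congr rfl expand, Finset.sum_add_distrib]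
      have h2 : ∑ k ∈ Finset.range (f+1), ((f.choose (k+1) : ℝ))/((f+a+b+1).choose (a+(k+1)))
          = ∑ k ∈ Finset.range f, ((f.choose (k+1) : ℝ))/((f+a+b+1).choose (a+(k+1))) := by
        rw [Finset.sum_range_succ]
        simp [Nat.choose_succ_self]
      have h3 : ∑ k ∈ Finset.range (f+1), ((f.choose k : ℝ))/((f+a+b+1).choose (a+k))
          = (∑ k ∈ Finset.range f, ((f.choose (k+1) : ℝ))/((f+a+b+1).choose (a+(k+1))))
            + ((f.choose 0 : ℝ))/((f+a+b+1).choose (a+0)) := by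
        exact Finset.sum_range_succ' (fun k => ((f.choose k : ℝ))/((f+a+b+1).choose (a+k))) f
      simp only [mul_add, mul_one_div]
      rw [Finset.sum_add_distrib, h2, h3]
      simp only [show ∀ k : ℕ, a+(k+1) = a+k+1 from fun k => by ring, Nat.choose_zero_right,
        Nat.add_zero, Nat.cast_one]
      ring
    rw [h1]
    have h4 : ∀ k ∈ Finset.range (f+1),
        (f.choose k : ℝ) * ((1:ℝ)/((f+a+b+1).choose (a+k)) + 1/((f+a+b+1).choose (a+k+1)))
          = ((f+a+b+2 : ℝ)/(f+a+b+1)) * ((f.choose k : ℝ)/((f+a+b).choose (a+k))) := by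
      intro k hk
      rw [Finset.mem_range] at hk
      have := pair_id' (f+a+b) (a+k) (by omega)
      rw [show f+a+b+1 = (f+a+b)+1 from rfl, this]
      have hC : ((f+a+b).choose (a+k) : ℝ) ≠ 0 := by
        exact_mod_cast (Nat.choose_pos (by omega : a+k ≤ f+a+b)).ne'
      have hM : ((f:ℝ)+a+b+1) ≠ 0 := by positivity
      push_cast
      field_simp
    rw [Finset.sum_congr rfl h4, ← Finset.mul_sum, ih]
    have hpos : ((f:ℝ)+a+b+1) ≠ 0 := by positivity
    have hpos2 : ((a:ℝ)+b+1) ≠ 0 := by positivity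
    push_cast
    field_simp
    ring

private lemma weight_sum' (n : ℕ) (i : Fin n) (M B : Finset (Fin n))
    (hMB : Disjoint M B) (hiM : i ∉ M) (hiB : i ∉ B) :
    ∑ S ∈ ((Finset.univ : Finset (Fin n)) \ {i}).powerset.filter
        (fun S => M ⊆ S ∧ Disjoint B S),
        (1:ℝ) / ((n : ℝ) * ((n-1).choose S.card : ℝ))
      = 1 / (((M.card + B.card : ℕ) + 1 : ℝ) * (((M.card + B.card).choose M.card : ℕ) : ℝ)) := by
  classical
  have hn : 1 ≤ n := Nat.pos_of_ne_zero (fun h => by subst h; exact i.elim0)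
  set U : Finset (Fin n) := Finset.univ \ {i} with hU
  have hMU : M ⊆ U := fun x hx => by
    simp [hU, Finset.mem_sdiff]
    rintro rfl; exact hiM hx
  have hBU : B ⊆ U := fun x hx => by
    simp [hU, Finset.mem_sdiff]
    rintro rfl; exact hiB hx
  have hcardU : U.card = n - 1 := by
    rw [hU, Finset.card_sdiff_of_subset (Finset.singleton_subset_iff.mpr (Finset.mem_univ i))]
    simp
  set F : Finset (Fin n) := (U \ M) \ B with hF
  have hcardF : F.card = n - 1 - M.card - B.card := by
    rw [hF, Finset.card_sdiff_of_subset, Finset.card_sdiff_of_subset hMU, hcardU]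
    intro x hx
    simp only [Finset.mem_sdiff]
    exact ⟨hBU hx, fun hxM => (Finset.disjoint_left.mp hMB hxM hx)⟩
  have hbij : ∑ S ∈ U.powerset.filter (fun S => M ⊆ S ∧ Disjoint B S),
      (1:ℝ) / ((n : ℝ) * ((n-1).choose S.card : ℝ))
      = ∑ T ∈ F.powerset, (1:ℝ) / ((n : ℝ) * ((n-1).choose (T.card + M.card) : ℝ)) := by
    refine Finset.sum_nbij' (fun S => S \ M) (fun T => T ∪ M) ?_ ?_ ?_ ?_ ?_
    · intro S hS
      simp only [Finset.mem_filter, Finset.mem_powerset] at hS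
      obtain ⟨hSU, hMS, hBS⟩ := hS
      simp only [Finset.mem_powerset, hF]
      intro x hx
      simp only [Finset.mem_sdiff] at hx ⊢
      exact ⟨⟨hSU hx.1, hx.2⟩, fun hxB => Finset.disjoint_left.mp hBS hxB hx.1⟩
    · intro T hT
      simp only [Finset.mem_powerset, hF] at hT
      simp only [Finset.mem_filter, Finset.mem_powerset]
      refine ⟨Finset.union_subset (fun x hx => ?_) hMU, Finset.subset_union_right, ?_⟩
      · have := hT hx; simp only [Finset.mem_sdiff] at this; exact this.1.1
      · rw [Finset.disjoint_union_right]
        constructor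
        · rw [Finset.disjoint_left]
          intro x hxB hxT
          have := hT hxT; simp only [Finset.mem_sdiff] at this; exact this.2 hxB
        · exact hMB.symm
    · intro S hS
      simp only [Finset.mem_filter, Finset.mem_powerset] at hS
      exact Finset.sdiff_union_of_subset hS.2.1
    · intro T hT
      simp only [Finset.mem_powerset, hF] at hT
      apply Finset.union_sdiff_cancel_right
      rw [Finset.disjoint_left]
      intro x hxT
      have := hT hxT; simp only [Finset.mem_sdiff] at this; exact fun h => this.1.2 h
    · intro S hS
      simp only [Finset.mem_filter, Finset.mem_powerset] at hS
      rw [Finset.card_sdiff_of_subset hS.2.1, Nat.sub_add_cancel (Finset.card_le_card hS.2.1)]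
  rw [hbij, Finset.sum_powerset F (fun T => (1:ℝ) / ((n : ℝ) * ((n-1).choose (T.card + M.card) : ℝ)))]
  have hinner : ∀ j ∈ Finset.range (F.card + 1),
      ∑ T ∈ Finset.powersetCard j F, (1:ℝ) / ((n : ℝ) * ((n-1).choose (T.card + M.card) : ℝ))
        = (F.card.choose j : ℝ) * ((1:ℝ) / ((n : ℝ) * ((n-1).choose (M.card + j) : ℝ))) := by
    intro j hj
    rw [Finset.sum_congr rfl (fun T hT => by
      rw [(Finset.mem_powersetCard.mp hT).2, Nat.add_comm j M.card]),
      Finset.sum_const, Finset.card_powersetCard, nsmul_eq_mul]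
  rw [Finset.sum_congr rfl hinner]
  have hfab : F.card + M.card + B.card = n - 1 := by
    have h1 : M.card + B.card ≤ n - 1 := by
      rw [← hcardU, ← Finset.card_union_of_disjoint hMB]
      exact Finset.card_le_card (Finset.union_subset hMU hBU)
    omega
  have hkey := key_id' M.card B.card F.card
  rw [hfab] at hkey
  have hn0 : (n:ℝ) ≠ 0 := by positivity
  calc ∑ j ∈ Finset.range (F.card + 1),
        (F.card.choose j : ℝ) * ((1:ℝ) / ((n : ℝ) * ((n-1).choose (M.card + j) : ℝ)))
      = (1/(n:ℝ)) * ∑ j ∈ Finset.range (F.card + 1),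
          ((F.card.choose j : ℝ)) / (((n-1).choose (M.card + j) : ℝ)) := by
        rw [Finset.mul_sum]
        refine Finset.sum_congr rfl (fun j _ => ?_)
        rw [one_div, mul_inv]
        ring
    _ = (1/(n:ℝ)) * (((F.card : ℝ) + M.card + B.card + 1)
          / (((M.card : ℝ) + B.card + 1) * (((M.card + B.card).choose M.card : ℕ) : ℝ))) := by
        rw [hkey]
    _ = 1 / (((M.card + B.card : ℕ) + 1 : ℝ) * (((M.card + B.card).choose M.card : ℕ) : ℝ)) := by
        have h2 : F.card + M.card + B.card + 1 = n := by omega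
        have hcast : ((F.card : ℝ) + M.card + B.card + 1) = n := by
          exact_mod_cast congrArg (Nat.cast (R := ℝ)) h2
        have hcp : (((M.card + B.card).choose M.card : ℕ) : ℝ) ≠ 0 := by
          exact_mod_cast (Nat.choose_pos (Nat.le_add_right _ _)).ne'
        rw [hcast]
        push_cast
        field_simp

private lemma caseA' (d e : ℕ) :
    1 / (((d + e : ℕ) + 1 : ℝ) * (((d+e).choose d : ℕ) : ℝ))
      = (1 / ((((d+1) + e : ℕ) + 1 : ℝ) * ((((d+1) + e).choose (d+1) : ℕ) : ℝ))) *
        (((((d+1) + e : ℕ) + 1 : ℝ)) / (((d+1 : ℕ) : ℝ))) := by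
  have hnat : (d+e+1) * ((d+e).choose d) = ((d+e+1).choose (d+1)) * (d+1) :=
    Nat.add_one_mul_choose_eq (d+e) d
  have hcast : ((d:ℝ)+e+1) * ((d+e).choose d : ℝ)
      = (((d+e+1).choose (d+1) : ℕ) : ℝ) * ((d:ℝ)+1) := by
    exact_mod_cast congrArg (Nat.cast (R := ℝ)) hnat
  have hC1 : (((d+e).choose d : ℕ) : ℝ) ≠ 0 := by
    exact_mod_cast (Nat.choose_pos (Nat.le_add_right d e)).ne'
  have hC2 : (((d+e+1).choose (d+1) : ℕ) : ℝ) ≠ 0 := by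
    exact_mod_cast (Nat.choose_pos (by omega)).ne'
  rw [show (d+1)+e = (d+e)+1 from by omega]
  push_cast
  field_simp
  nlinarith [hcast]

private lemma caseB' (r c : ℕ) :
    1 / (((r + c : ℕ) + 1 : ℝ) * (((r+c).choose r : ℕ) : ℝ))
      = (1 / (((r + (c+1) : ℕ) + 1 : ℝ) * (((r + (c+1)).choose r : ℕ) : ℝ))) *
        ((((r + (c+1) : ℕ) + 1 : ℝ)) / (((r + (c+1) : ℕ) : ℝ) - (r:ℝ))) := by
  have hnat : (r+c+1) * ((r+c).choose r) = ((r+c+1).choose r) * (c+1) := by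
    have h1 := Nat.add_one_mul_choose_eq (r+c) r
    have h2 := Nat.choose_succ_right_eq (r+c+1) r
    have h3 : r+c+1-r = c+1 := by omega
    rw [h3] at h2
    exact h1.trans h2
  have hcast : ((r:ℝ)+c+1) * ((r+c).choose r : ℝ)
      = (((r+c+1).choose r : ℕ) : ℝ) * ((c:ℝ)+1) := by
    exact_mod_cast congrArg (Nat.cast (R := ℝ)) hnat
  have hC1 : (((r+c).choose r : ℕ) : ℝ) ≠ 0 := by
    exact_mod_cast (Nat.choose_pos (Nat.le_add_right r c)).ne'
  have hC2 : (((r+c+1).choose r : ℕ) : ℝ) ≠ 0 := by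
    exact_mod_cast (Nat.choose_pos (by omega)).ne'
  rw [show r+(c+1) = (r+c)+1 from by omega]
  push_cast
  rw [show ((r:ℝ)+(c:ℝ)+1) - r = (c:ℝ)+1 from by ring]
  field_simp
  nlinarith [hcast]

private lemma sum_mul_le' {n : ℕ} (A : Finset (Finset (Fin n))) (w : Finset (Fin n) → ℝ)
    (hw : ∀ S ∈ A, 0 ≤ w S) (φ : Finset (Fin n) → ℝ) (c : ℝ)
    (hc : ∀ S ∈ A, φ S ≤ c) :
    ∑ S ∈ A, w S * φ S ≤ (∑ S ∈ A, w S) * c := by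
  rw [Finset.sum_mul]
  exact Finset.sum_le_sum (fun S hS =>
    mul_le_mul_of_nonneg_left (hc S hS) (hw S hS))

private lemma le_sum_mul' {n : ℕ} (A : Finset (Finset (Fin n))) (w : Finset (Fin n) → ℝ)
    (hw : ∀ S ∈ A, 0 ≤ w S) (φ : Finset (Fin n) → ℝ) (c : ℝ)
    (hc : ∀ S ∈ A, c ≤ φ S) :
    (∑ S ∈ A, w S) * c ≤ ∑ S ∈ A, w S * φ S := by
  rw [Finset.sum_mul]
  exact Finset.sum_le_sum (fun S hS =>
    mul_le_mul_of_nonneg_left (hc S hS) (hw S hS))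

private lemma sum_split' {K : ℕ} (p q : Fin K → Prop) [DecidablePred p] [DecidablePred q]
    (hpq : ∀ j, q j → ¬ p j) (A B C : Fin K → ℝ) :
    ∑ j : Fin K, (if p j then A j else if q j then B j else C j)
      = (∑ j ∈ Finset.univ.filter p, A j) + (∑ j ∈ Finset.univ.filter q, B j)
        + (∑ j ∈ Finset.univ.filter (fun j => ¬ p j ∧ ¬ q j), C j) := by
  rw [← Finset.sum_filter_add_sum_filter_not Finset.univ p]
  have h1 : ∑ j ∈ Finset.univ.filter p, (if p j then A j else if q j then B j else C j)
      = ∑ j ∈ Finset.univ.filter p, A j :=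
    Finset.sum_congr rfl (fun j hj => by rw [if_pos (Finset.mem_filter.mp hj).2])
  have h2 : ∑ j ∈ Finset.univ.filter (fun j => ¬ p j),
        (if p j then A j else if q j then B j else C j)
      = ∑ j ∈ Finset.univ.filter (fun j => ¬ p j), (if q j then B j else C j) :=
    Finset.sum_congr rfl (fun j hj => by rw [if_neg (Finset.mem_filter.mp hj).2])
  rw [h1, h2, ← Finset.sum_filter_add_sum_filter_not
    (Finset.univ.filter (fun j => ¬ p j)) q]
  have e1 : (Finset.univ.filter (fun j => ¬ p j)).filter q = Finset.univ.filter q := by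
    ext j
    simp only [Finset.mem_filter, Finset.mem_univ, true_and]
    exact ⟨fun h => h.2, fun h => ⟨hpq j h, h⟩⟩
  have e2 : (Finset.univ.filter (fun j => ¬ p j)).filter (fun j => ¬ q j)
      = Finset.univ.filter (fun j => ¬ p j ∧ ¬ q j) := by
    rw [Finset.filter_filter]
  rw [e1, e2]
  have h3 : ∑ j ∈ Finset.univ.filter q, (if q j then B j else C j)
      = ∑ j ∈ Finset.univ.filter q, B j :=
    Finset.sum_congr rfl (fun j hj => by rw [if_pos (Finset.mem_filter.mp hj).2])
  have h4 : ∑ j ∈ Finset.univ.filter (fun j => ¬ p j ∧ ¬ q j), (if q j then B j else C j)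
      = ∑ j ∈ Finset.univ.filter (fun j => ¬ p j ∧ ¬ q j), C j :=
    Finset.sum_congr rfl (fun j hj => by rw [if_neg (Finset.mem_filter.mp hj).2.2])
  rw [h3, h4, add_assoc]

theorem stmt_14 (n K : ℕ) (hn : 1 ≤ n) (i : Fin n)
    (I E : Fin K → Finset (Fin n))
    (hIE : ∀ j, Disjoint (I j) (E j))
    -- the branches `B j = {S : I j ⊆ S, E j ∩ S = ∅}` partition the full power set
    (hpart : ∀ S : Finset (Fin n), ∃! j : Fin K, I j ⊆ S ∧ Disjoint (E j) S)
    (v : Finset (Fin n) → ℝ) (l u : Fin K → ℝ)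
    (hl : ∀ j, ∀ S : Finset (Fin n), I j ⊆ S → Disjoint (E j) S → l j ≤ v S)
    (hu : ∀ j, ∀ S : Finset (Fin n), I j ⊆ S → Disjoint (E j) S → v S ≤ u j) :
    -- abbreviations
    (fun (r s : Fin K → ℕ) (Λ Λm Λp : Fin K → ℝ) (φ : ℝ) =>
      (∑ j ∈ Finset.univ.filter (fun j => i ∈ I j), Λm j * l j)
          + (∑ j ∈ Finset.univ.filter (fun j => i ∉ I j ∧ i ∉ E j),
              Λ j * (l j - u j))
          - (∑ j ∈ Finset.univ.filter (fun j => i ∈ E j), Λp j * u j)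
        ≤ φ ∧
      φ ≤ (∑ j ∈ Finset.univ.filter (fun j => i ∈ I j), Λm j * u j)
          + (∑ j ∈ Finset.univ.filter (fun j => i ∉ I j ∧ i ∉ E j),
              Λ j * (u j - l j))
          - (∑ j ∈ Finset.univ.filter (fun j => i ∈ E j), Λp j * l j))
      (fun j => (I j).card)
      (fun j => (I j).card + (E j).card)
      (fun j => 1 / ((((I j).card + (E j).card : ℕ) + 1 : ℝ) *
        (((I j).card + (E j).card).choose (I j).card : ℝ)))
      (fun j => (1 / ((((I j).card + (E j).card : ℕ) + 1 : ℝ) *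
        (((I j).card + (E j).card).choose (I j).card : ℝ))) *
        ((((I j).card + (E j).card : ℕ) + 1 : ℝ) / ((I j).card : ℝ)))
      (fun j => (1 / ((((I j).card + (E j).card : ℕ) + 1 : ℝ) *
        (((I j).card + (E j).card).choose (I j).card : ℝ))) *
        ((((I j).card + (E j).card : ℕ) + 1 : ℝ) /
          ((((I j).card + (E j).card : ℕ) : ℝ) - ((I j).card : ℝ))))
      (∑ S ∈ ((Finset.univ : Finset (Fin n)) \ {i}).powerset,
        (1 / ((n : ℝ) * ((n - 1).choose S.card : ℝ))) * (v (insert i S) - v S)) := by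
  beta_reduce
  set w : Finset (Fin n) → ℝ := fun S => 1 / ((n : ℝ) * ((n-1).choose S.card : ℝ)) with hw
  set P : Finset (Finset (Fin n)) := ((Finset.univ : Finset (Fin n)) \ {i}).powerset with hP
  set g : Finset (Fin n) → Fin K := fun T => Fintype.choose _ (hpart T) with hg
  set Λ : Fin K → ℝ := fun j => 1 / ((((I j).card + (E j).card : ℕ) + 1 : ℝ) *
      (((I j).card + (E j).card).choose (I j).card : ℝ)) with hΛ
  set Λm : Fin K → ℝ := fun j => (1 / ((((I j).card + (E j).card : ℕ) + 1 : ℝ) *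
      (((I j).card + (E j).card).choose (I j).card : ℝ))) *
      ((((I j).card + (E j).card : ℕ) + 1 : ℝ) / ((I j).card : ℝ)) with hΛm
  set Λp : Fin K → ℝ := fun j => (1 / ((((I j).card + (E j).card : ℕ) + 1 : ℝ) *
      (((I j).card + (E j).card).choose (I j).card : ℝ))) *
      ((((I j).card + (E j).card : ℕ) + 1 : ℝ) /
        ((((I j).card + (E j).card : ℕ) : ℝ) - ((I j).card : ℝ))) with hΛp
  have hgspec : ∀ T, I (g T) ⊆ T ∧ Disjoint (E (g T)) T := fun T =>
    Fintype.choose_spec _ (hpart T)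
  have hgiff : ∀ T j, g T = j ↔ (I j ⊆ T ∧ Disjoint (E j) T) := by
    intro T j
    constructor
    · rintro rfl; exact hgspec T
    · intro h
      exact (hpart T).unique (hgspec T) h
  have hwpos : ∀ S ∈ P, 0 ≤ w S := by
    intro S hS
    rw [hw]
    positivity
  have hiP : ∀ S ∈ P, i ∉ S := by
    intro S hS hiS
    rw [hP, Finset.mem_powerset] at hS
    have := hS hiS
    simp at this
  have hplus : ∑ S ∈ P, w S * v (insert i S)
      = ∑ j : Fin K, ∑ S ∈ P.filter (fun S => g (insert i S) = j), w S * v (insert i S) :=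
    (Finset.sum_fiberwise_of_maps_to (fun S _ => Finset.mem_univ (g (insert i S))) _).symm
  have hminus : ∑ S ∈ P, w S * v S
      = ∑ j : Fin K, ∑ S ∈ P.filter (fun S => g S = j), w S * v S :=
    (Finset.sum_fiberwise_of_maps_to (fun S _ => Finset.mem_univ (g S)) _).symm
  have hfilter_plus : ∀ j, i ∉ E j →
      P.filter (fun S => g (insert i S) = j)
        = P.filter (fun S => (I j).erase i ⊆ S ∧ Disjoint (E j) S) := by
    intro j hiE
    apply Finset.filter_congr
    intro S hS
    rw [hgiff, Finset.subset_insert_iff, Finset.disjoint_insert_right]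
    simp [hiE]
  have hfilter_plus_empty : ∀ j, i ∈ E j →
      P.filter (fun S => g (insert i S) = j) = ∅ := by
    intro j hiE
    rw [Finset.filter_eq_empty_iff]
    intro S hS h
    rw [hgiff, Finset.disjoint_insert_right] at h
    exact h.2.1 hiE
  have hfilter_minus : ∀ j, i ∉ I j →
      P.filter (fun S => g S = j)
        = P.filter (fun S => I j ⊆ S ∧ Disjoint ((E j).erase i) S) := by
    intro j hiI
    apply Finset.filter_congr
    intro S hS
    rw [hgiff]
    constructor
    · rintro ⟨h1, h2⟩
      exact ⟨h1, h2.mono_left (Finset.erase_subset _ _)⟩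
    · rintro ⟨h1, h2⟩
      refine ⟨h1, Finset.disjoint_left.mpr (fun x hxE hxS => ?_)⟩
      rcases eq_or_ne x i with rfl | hx
      · exact hiP S hS hxS
      · exact Finset.disjoint_left.mp h2 (Finset.mem_erase.mpr ⟨hx, hxE⟩) hxS
  have hfilter_minus_empty : ∀ j, i ∈ I j →
      P.filter (fun S => g S = j) = ∅ := by
    intro j hiI
    rw [Finset.filter_eq_empty_iff]
    intro S hS h
    rw [hgiff] at h
    exact hiP S hS (h.1 hiI)
  -- weight sums per case
  have hWp_A : ∀ j, i ∈ I j →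
      ∑ S ∈ P.filter (fun S => g (insert i S) = j), w S = Λm j := by
    intro j hiI
    have hiE : i ∉ E j := fun h => Finset.disjoint_left.mp (hIE j) hiI h
    obtain ⟨d, hd⟩ : ∃ d, (I j).card = d + 1 :=
      ⟨(I j).card - 1, by have := Finset.card_pos.mpr ⟨i, hiI⟩; omega⟩
    have hMdisj : Disjoint ((I j).erase i) (E j) :=
      (hIE j).mono_left (Finset.erase_subset _ _)
    have hws := weight_sum' n i ((I j).erase i) (E j) hMdisj (Finset.notMem_erase i _) hiE
    have hcard : ((I j).erase i).card = d := by
      rw [Finset.card_erase_of_mem hiI, hd]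
      omega
    rw [hfilter_plus j hiE, hP, hw]
    rw [hcard] at hws
    rw [hws, hΛm]
    simp only
    rw [hd]
    exact caseA' d (E j).card
  have hWm_B : ∀ j, i ∈ E j →
      ∑ S ∈ P.filter (fun S => g S = j), w S = Λp j := by
    intro j hiE
    have hiI : i ∉ I j := fun h => Finset.disjoint_left.mp (hIE j) h hiE
    obtain ⟨c, hc⟩ : ∃ c, (E j).card = c + 1 :=
      ⟨(E j).card - 1, by have := Finset.card_pos.mpr ⟨i, hiE⟩; omega⟩
    have hMdisj : Disjoint (I j) ((E j).erase i) :=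
      (hIE j).mono_right (Finset.erase_subset _ _)
    have hws := weight_sum' n i (I j) ((E j).erase i) hMdisj hiI (Finset.notMem_erase i _)
    have hcard : ((E j).erase i).card = c := by
      rw [Finset.card_erase_of_mem hiE, hc]
      omega
    rw [hfilter_minus j hiI, hP, hw]
    rw [hcard] at hws
    rw [hws, hΛp]
    simp only
    rw [hc]
    exact caseB' (I j).card c
  have hWp_C : ∀ j, i ∉ I j → i ∉ E j →
      ∑ S ∈ P.filter (fun S => g (insert i S) = j), w S = Λ j := by
    intro j hiI hiE
    have hws := weight_sum' n i (I j) (E j) (hIE j) hiI hiE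
    rw [hfilter_plus j hiE, Finset.erase_eq_of_notMem hiI, hP, hw]
    rw [hws, hΛ]
  have hWm_C : ∀ j, i ∉ I j → i ∉ E j →
      ∑ S ∈ P.filter (fun S => g S = j), w S = Λ j := by
    intro j hiI hiE
    have hws := weight_sum' n i (I j) (E j) (hIE j) hiI hiE
    rw [hfilter_minus j hiI, Finset.erase_eq_of_notMem hiE, hP, hw]
    rw [hws, hΛ]
  -- value bounds on fibers
  have hvp : ∀ j, ∀ S ∈ P.filter (fun S => g (insert i S) = j),
      l j ≤ v (insert i S) ∧ v (insert i S) ≤ u j := by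
    intro j S hS
    have h := (hgiff (insert i S) j).mp (Finset.mem_filter.mp hS).2
    exact ⟨hl j _ h.1 h.2, hu j _ h.1 h.2⟩
  have hvm : ∀ j, ∀ S ∈ P.filter (fun S => g S = j),
      l j ≤ v S ∧ v S ≤ u j := by
    intro j S hS
    have h := (hgiff S j).mp (Finset.mem_filter.mp hS).2
    exact ⟨hl j _ h.1 h.2, hu j _ h.1 h.2⟩
  -- per-branch bounds
  have hup : ∀ j : Fin K,
      (∑ S ∈ P.filter (fun S => g (insert i S) = j), w S * v (insert i S))
        - (∑ S ∈ P.filter (fun S => g S = j), w S * v S)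
      ≤ (if i ∈ I j then Λm j * u j else if i ∈ E j then -(Λp j * l j)
          else Λ j * (u j - l j)) := by
    intro j
    by_cases hI : i ∈ I j
    · rw [if_pos hI, hfilter_minus_empty j hI, Finset.sum_empty, sub_zero]
      have hb := sum_mul_le' (P.filter (fun S => g (insert i S) = j)) w
        (fun S hS => hwpos S (Finset.mem_of_mem_filter S hS)) (fun S => v (insert i S)) (u j)
        (fun S hS => (hvp j S hS).2)
      rw [hWp_A j hI] at hb
      exact hb
    · by_cases hE : i ∈ E j
      · rw [if_neg hI, if_pos hE, hfilter_plus_empty j hE, Finset.sum_empty, zero_sub]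
        have hb := le_sum_mul' (P.filter (fun S => g S = j)) w
          (fun S hS => hwpos S (Finset.mem_of_mem_filter S hS)) v (l j)
          (fun S hS => (hvm j S hS).1)
        rw [hWm_B j hE] at hb
        linarith
      · rw [if_neg hI, if_neg hE]
        have hb1 := sum_mul_le' (P.filter (fun S => g (insert i S) = j)) w
          (fun S hS => hwpos S (Finset.mem_of_mem_filter S hS)) (fun S => v (insert i S)) (u j)
          (fun S hS => (hvp j S hS).2)
        have hb2 := le_sum_mul' (P.filter (fun S => g S = j)) w
          (fun S hS => hwpos S (Finset.mem_of_mem_filter S hS)) v (l j)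
          (fun S hS => (hvm j S hS).1)
        rw [hWp_C j hI hE] at hb1
        rw [hWm_C j hI hE] at hb2
        nlinarith [hb1, hb2]
  have hlow : ∀ j : Fin K,
      (if i ∈ I j then Λm j * l j else if i ∈ E j then -(Λp j * u j)
          else Λ j * (l j - u j))
      ≤ (∑ S ∈ P.filter (fun S => g (insert i S) = j), w S * v (insert i S))
        - (∑ S ∈ P.filter (fun S => g S = j), w S * v S) := by
    intro j
    by_cases hI : i ∈ I j
    · rw [if_pos hI, hfilter_minus_empty j hI, Finset.sum_empty, sub_zero]
      have hb := le_sum_mul' (P.filter (fun S => g (insert i S) = j)) w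
        (fun S hS => hwpos S (Finset.mem_of_mem_filter S hS)) (fun S => v (insert i S)) (l j)
        (fun S hS => (hvp j S hS).1)
      rw [hWp_A j hI] at hb
      exact hb
    · by_cases hE : i ∈ E j
      · rw [if_neg hI, if_pos hE, hfilter_plus_empty j hE, Finset.sum_empty, zero_sub]
        have hb := sum_mul_le' (P.filter (fun S => g S = j)) w
          (fun S hS => hwpos S (Finset.mem_of_mem_filter S hS)) v (u j)
          (fun S hS => (hvm j S hS).2)
        rw [hWm_B j hE] at hb
        linarith
      · rw [if_neg hI, if_neg hE]
        have hb1 := le_sum_mul' (P.filter (fun S => g (insert i S) = j)) w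
          (fun S hS => hwpos S (Finset.mem_of_mem_filter S hS)) (fun S => v (insert i S)) (l j)
          (fun S hS => (hvp j S hS).1)
        have hb2 := sum_mul_le' (P.filter (fun S => g S = j)) w
          (fun S hS => hwpos S (Finset.mem_of_mem_filter S hS)) v (u j)
          (fun S hS => (hvm j S hS).2)
        rw [hWp_C j hI hE] at hb1
        rw [hWm_C j hI hE] at hb2
        nlinarith [hb1, hb2]
  -- split phi
  have hφsplit : (∑ S ∈ P, w S * (v (insert i S) - v S))
      = ∑ j : Fin K, ((∑ S ∈ P.filter (fun S => g (insert i S) = j), w S * v (insert i S))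
          - (∑ S ∈ P.filter (fun S => g S = j), w S * v S)) := by
    calc ∑ S ∈ P, w S * (v (insert i S) - v S)
        = (∑ S ∈ P, w S * v (insert i S)) - ∑ S ∈ P, w S * v S := by
          rw [← Finset.sum_sub_distrib]
          exact Finset.sum_congr rfl (fun S _ => by ring)
      _ = _ := by rw [hplus, hminus, ← Finset.sum_sub_distrib]
  have hpq : ∀ j, i ∈ E j → ¬ (i ∈ I j) :=
    fun j h hI => Finset.disjoint_left.mp (hIE j) hI h
  have hU : (∑ S ∈ P, w S * (v (insert i S) - v S))
      ≤ (∑ j ∈ Finset.univ.filter (fun j => i ∈ I j), Λm j * u j)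
        + (∑ j ∈ Finset.univ.filter (fun j => i ∈ E j), -(Λp j * l j))
        + (∑ j ∈ Finset.univ.filter (fun j => ¬ (i ∈ I j) ∧ ¬ (i ∈ E j)), Λ j * (u j - l j)) := by
    rw [hφsplit, ← sum_split' (fun j => i ∈ I j) (fun j => i ∈ E j) hpq
      (fun j => Λm j * u j) (fun j => -(Λp j * l j)) (fun j => Λ j * (u j - l j))]
    exact Finset.sum_le_sum (fun j _ => hup j)
  have hL : (∑ j ∈ Finset.univ.filter (fun j => i ∈ I j), Λm j * l j)
        + (∑ j ∈ Finset.univ.filter (fun j => i ∈ E j), -(Λp j * u j))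
        + (∑ j ∈ Finset.univ.filter (fun j => ¬ (i ∈ I j) ∧ ¬ (i ∈ E j)), Λ j * (l j - u j))
      ≤ (∑ S ∈ P, w S * (v (insert i S) - v S)) := by
    rw [hφsplit, ← sum_split' (fun j => i ∈ I j) (fun j => i ∈ E j) hpq
      (fun j => Λm j * l j) (fun j => -(Λp j * u j)) (fun j => Λ j * (l j - u j))]
    exact Finset.sum_le_sum (fun j _ => hlow j)
  rw [Finset.sum_neg_distrib] at hU hL
  constructor
  · linarith [hL]
  · linarith [hU]
end
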